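/- Let T be a triangulated category and let C1, C2 be strictly full triangulated subcategories of T such that Hom_T(X, Y) = 0 for every object X of C2 and every object Y of C1. Assume that for every object D of T there exists a distinguished triangle B ⟶ D ⟶ A ⟶ B⟦1⟧ with B in C2 and A in C1. Then the inclusion functor of C1 into T admits a left adjoint, and C2 consists exactly of the objects D of T with Hom_T(D, Y) = 0 for all objects Y of C1. -/

import Mathlib

open CategoryTheory Category Limits Pretriangulated

universe v u

variable (T : Type u) [Category.{v} T] [HasZeroObject T] [HasShift T ℤ]
  [Preadditive T] [∀ n : ℤ, (shiftFunctor T n).Additive] [Pretriangulated T]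

/-- A strictly full triangulated subcategory of `T`, encoded as a predicate on objects:
it contains the zero objects, is closed under isomorphisms, is closed under shifts in
both directions, and is closed under extensions. -/
structure IsTriangulatedSubcategory (P : T → Prop) : Prop where
  zero : ∀ X : T, IsZero X → P X
  isoClosed : ∀ ⦃X Y : T⦄, (X ≅ Y) → P X → P Y
  shift : ∀ (X : T) (n : ℤ), P X → P (X⟦n⟧)
  ext₂ : ∀ Tr : Triangle T, (Tr ∈ distTriang T) → P Tr.obj₁ → P Tr.obj₃ → P Tr.obj₂

/-- If `C₁`, `C₂` are strictly full triangulated subcategories with no nonzero morphisms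
from `C₂` to `C₁` such that every object of `T` fits into a distinguished triangle
`B ⟶ D ⟶ A ⟶ B⟦1⟧` with `B ∈ C₂` and `A ∈ C₁`, then the inclusion functor of `C₁` into
`T` admits a left adjoint and `C₂` is the left orthogonal of `C₁`. -/
theorem decomposition_triangles_give_left_adjoint [IsTriangulated T]
    (C1 C2 : T → Prop)
    (hC1 : IsTriangulatedSubcategory T C1) (hC2 : IsTriangulatedSubcategory T C2)
    (hHom : ∀ (X Y : T), C2 X → C1 Y → ∀ f : X ⟶ Y, f = 0)
    (htriang : ∀ D : T, ∃ (B A : T) (f : B ⟶ D) (g : D ⟶ A) (h : A ⟶ B⟦(1 : ℤ)⟧),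
      C2 B ∧ C1 A ∧ (Triangle.mk f g h ∈ distTriang T)) :
    (ObjectProperty.ι C1).IsRightAdjoint ∧
      (∀ D : T, C2 D ↔ ∀ Y : T, C1 Y → ∀ f : D ⟶ Y, f = 0) := by
  constructor
  · have key : ∀ D : T, HasInitial (StructuredArrow D (ObjectProperty.ι C1)) := by
      intro D
      obtain ⟨B, A, f, g, h, hB, hA, hdist⟩ := htriang D
      have exists_fac : ∀ (Y : T), C1 Y → ∀ (y : D ⟶ Y), ∃ k : A ⟶ Y, y = g ≫ k := by
        intro Y hY y
        exact Triangle.yoneda_exact₂ _ hdist y (hHom B Y hB hY (f ≫ y))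
      have uniq_fac : ∀ (Y : T), C1 Y → ∀ (k k' : A ⟶ Y), g ≫ k = g ≫ k' → k = k' := by
        intro Y hY k k' hkk
        have h0 : g ≫ (k - k') = 0 := by
          rw [Preadditive.comp_sub, hkk, sub_self]
        obtain ⟨w, hw⟩ := Triangle.yoneda_exact₃ _ hdist (k - k') h0
        have hw0 : w = 0 := hHom _ _ (hC2.shift B 1 hB) hY w
        rw [hw0, comp_zero] at hw
        exact sub_eq_zero.1 hw
      have init : IsInitial (StructuredArrow.mk
          (T := ObjectProperty.ι C1) (Y := (⟨A, hA⟩ : ObjectProperty.FullSubcategory C1)) g) := by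
        refine IsInitial.ofUniqueHom (fun Y' => StructuredArrow.homMk
          (ObjectProperty.homMk (Classical.choose (exists_fac Y'.right.1 Y'.right.2 Y'.hom)))
          (Classical.choose_spec (exists_fac Y'.right.1 Y'.right.2 Y'.hom)).symm) ?_
        intro Y' m
        refine StructuredArrow.hom_ext _ _ ?_
        refine InducedCategory.hom_ext ?_
        refine uniq_fac Y'.right.1 Y'.right.2 _ _ ?_
        have := StructuredArrow.w m
        dsimp at this ⊢
        rw [this, (Classical.choose_spec (exists_fac Y'.right.1 Y'.right.2 Y'.hom)).symm]
      exact init.hasInitial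
    exact isRightAdjointOfStructuredArrowInitials _
  · intro D
    constructor
    · intro hD Y hY f
      exact hHom D Y hD hY f
    · intro hD
      obtain ⟨B, A, f, g, h, hB, hA, hdist⟩ := htriang D
      have hg : g = 0 := hD A hA g
      have hid : 𝟙 A = 0 := by
        obtain ⟨w, hw⟩ := Triangle.yoneda_exact₃ _ hdist (𝟙 A)
          (by change g ≫ 𝟙 A = 0; rw [hg, zero_comp])
        rw [hw, hHom _ _ (hC2.shift B 1 hB) hA w]; exact comp_zero
      have hzero : IsZero A := (IsZero.iff_id_eq_zero A).2 hid
      have : IsIso f := (Triangle.isZero₃_iff_isIso₁ _ hdist).1 hzero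
      exact hC2.isoClosed (asIso f) hB
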